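/- Let r ≥ 1 and t ≥ 0 be real. Then the function a ↦ [1 + (1+a)t]^{−r} · ([1 + (2+a)t]^{r+1} − [1 + a·t]^{r+1}) is nonincreasing in a on [0, ∞). -/

import Mathlib

open Real Set

/-- Young-type inequality: `r * x^(r-1) * y ≤ (r-1) * x^r + y^r`. -/
lemma phi_nonneg (r : ℝ) (hr : 1 ≤ r) {x y : ℝ} (hy : 0 ≤ y) (hx : 0 < x) :
    r * x ^ (r - 1) * y ≤ (r - 1) * x ^ r + y ^ r := by
  rcases eq_or_lt_of_le hr with h1 | h1
  · subst h1
    simp [Real.rpow_one]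
  · have hr0 : (0:ℝ) < r - 1 := by linarith
    have hpq : (r / (r - 1)).HolderConjugate r := by
      exact ((Real.holderConjugate_iff_eq_conjExponent h1).2 rfl).symm
    have hY := Real.young_inequality_of_nonneg
      (Real.rpow_nonneg hx.le (r - 1)) hy hpq
    have hx1 : (x ^ (r - 1)) ^ (r / (r - 1)) = x ^ r := by
      rw [← Real.rpow_mul hx.le]
      congr 1
      field_simp
    rw [hx1] at hY
    have h2 : x ^ r / (r / (r - 1)) = (r - 1) / r * x ^ r := by
      field_simp
    rw [h2] at hY
    have hrpos : (0:ℝ) < r := by linarith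
    have := mul_le_mul_of_nonneg_left hY hrpos.le
    calc r * x ^ (r - 1) * y = r * (x ^ (r - 1) * y) := by ring
      _ ≤ r * ((r - 1) / r * x ^ r + y ^ r / r) := this
      _ = (r - 1) * x ^ r + y ^ r := by field_simp; try ring

/-- Key inequality. -/
lemma key_ineq (r : ℝ) (hr : 1 ≤ r) {x y : ℝ} (hy : 0 < y) (hxy : y ≤ x) :
    (r + 1) * (x ^ r * y - x * y ^ r) ≤ (r - 1) * (x ^ (r + 1) - y ^ (r + 1)) := by
  set F : ℝ → ℝ := fun x => (r - 1) * (x ^ (r + 1) - y ^ (r + 1)) -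
      (r + 1) * (x ^ r * y - x * y ^ r) with hF
  have hder : ∀ z ∈ Ici y, HasDerivAt F
      ((r - 1) * ((r + 1) * z ^ (r + 1 - 1)) -
        (r + 1) * ((r * z ^ (r - 1)) * y - y ^ r)) z := by
    intro z hz
    have hz0 : 0 < z := lt_of_lt_of_le hy hz
    have h1 : HasDerivAt (fun w : ℝ => w ^ (r + 1)) ((r + 1) * z ^ (r + 1 - 1)) z :=
      Real.hasDerivAt_rpow_const (Or.inl hz0.ne')
    have h2 : HasDerivAt (fun w : ℝ => w ^ r) (r * z ^ (r - 1)) z :=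
      Real.hasDerivAt_rpow_const (Or.inl hz0.ne')
    have h3 : HasDerivAt (fun w : ℝ => (r - 1) * (w ^ (r + 1) - y ^ (r + 1))) 
        ((r - 1) * ((r + 1) * z ^ (r + 1 - 1))) z := ((h1.sub_const _).const_mul _)
    have h4 : HasDerivAt (fun w : ℝ => (r + 1) * (w ^ r * y - w * y ^ r))
        ((r + 1) * ((r * z ^ (r - 1)) * y - 1 * y ^ r)) z :=
      (((h2.mul_const y).sub ((hasDerivAt_id z).mul_const (y ^ r))).const_mul _)
    have h5 := h3.sub h4
    simp only [one_mul] at h5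
    exact h5
  have hmono : MonotoneOn F (Ici y) := by
    apply monotoneOn_of_deriv_nonneg (convex_Ici y)
    · exact fun z hz => (hder z hz).differentiableAt.continuousAt.continuousWithinAt
    · intro z hz
      rw [interior_Ici] at hz
      exact (hder z (Set.mem_Ici.mpr (le_of_lt hz))).differentiableAt.differentiableWithinAt
    · intro z hz
      rw [interior_Ici] at hz
      rw [(hder z (Set.mem_Ici.mpr hz.le)).deriv]
      have hz0 : 0 < z := lt_of_lt_of_le hy hz.le
      have hphi := phi_nonneg r hr hy.le hz0
      have he : r + 1 - 1 = r := by ring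
      rw [he]
      nlinarith [hphi, (by linarith : (0:ℝ) ≤ r + 1)]
  have hFy : F y = 0 := by simp only [hF]; ring
  have := hmono (self_mem_Ici) hxy hxy
  rw [hFy] at this
  simp only [hF] at this
  linarith

theorem stmt_6 (r t : ℝ) (hr : 1 ≤ r) (ht : 0 ≤ t) :
    AntitoneOn (fun a : ℝ =>
      (1 + (1 + a) * t) ^ (-r) *
        ((1 + (2 + a) * t) ^ (r + 1) - (1 + a * t) ^ (r + 1)))
      (Set.Ici 0) := by
  set f : ℝ → ℝ := fun a =>
      (1 + (1 + a) * t) ^ (-r) *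
        ((1 + (2 + a) * t) ^ (r + 1) - (1 + a * t) ^ (r + 1)) with hf
  have hbase : ∀ a : ℝ, 0 ≤ a → (0:ℝ) < 1 + a * t := by
    intro a ha
    nlinarith [mul_nonneg ha ht]
  have hder : ∀ a ∈ Ici (0:ℝ), HasDerivAt f
      ((-r * (1 + (1 + a) * t) ^ (-r - 1) * t) *
          ((1 + (2 + a) * t) ^ (r + 1) - (1 + a * t) ^ (r + 1)) +
        (1 + (1 + a) * t) ^ (-r) *
          ((r + 1) * (1 + (2 + a) * t) ^ (r + 1 - 1) * t -
            (r + 1) * (1 + a * t) ^ (r + 1 - 1) * t)) a := by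
    intro a ha
    have hu0 : (0:ℝ) < 1 + (1 + a) * t := hbase (1 + a) (by have h := Set.mem_Ici.mp ha; linarith)
    have hx0 : (0:ℝ) < 1 + (2 + a) * t := hbase (2 + a) (by have h := Set.mem_Ici.mp ha; linarith)
    have hy0 : (0:ℝ) < 1 + a * t := hbase a ha
    have hu : HasDerivAt (fun a : ℝ => 1 + (1 + a) * t) t a := by
      simpa using (((hasDerivAt_id a).const_add 1).mul_const t).const_add 1
    have hx : HasDerivAt (fun a : ℝ => 1 + (2 + a) * t) t a := by
      simpa using (((hasDerivAt_id a).const_add 2).mul_const t).const_add 1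
    have hy : HasDerivAt (fun a : ℝ => 1 + a * t) t a := by
      simpa using ((hasDerivAt_id a).mul_const t).const_add 1
    have hA : HasDerivAt (fun a : ℝ => (1 + (1 + a) * t) ^ (-r))
        ((-r * (1 + (1 + a) * t) ^ (-r - 1)) * t) a :=
      HasDerivAt.comp a (h := fun a : ℝ => 1 + (1 + a) * t) (Real.hasDerivAt_rpow_const (p := -r) (Or.inl hu0.ne')) hu
    have hB : HasDerivAt (fun a : ℝ => (1 + (2 + a) * t) ^ (r + 1))
        (((r + 1) * (1 + (2 + a) * t) ^ (r + 1 - 1)) * t) a :=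
      HasDerivAt.comp a (h := fun a : ℝ => 1 + (2 + a) * t) (Real.hasDerivAt_rpow_const (p := r + 1) (Or.inl hx0.ne')) hx
    have hC : HasDerivAt (fun a : ℝ => (1 + a * t) ^ (r + 1))
        (((r + 1) * (1 + a * t) ^ (r + 1 - 1)) * t) a :=
      HasDerivAt.comp a (h := fun a : ℝ => 1 + a * t) (Real.hasDerivAt_rpow_const (p := r + 1) (Or.inl hy0.ne')) hy
    exact hA.mul (hB.sub hC)
  apply antitoneOn_of_deriv_nonpos (convex_Ici 0)
  · exact fun a ha => (hder a ha).differentiableAt.continuousAt.continuousWithinAt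
  · intro a ha
    rw [interior_Ici] at ha
    exact (hder a (Set.mem_Ici.mpr ha.le)).differentiableAt.differentiableWithinAt
  · intro a ha
    rw [interior_Ici] at ha
    rw [(hder a (Set.mem_Ici.mpr ha.le)).deriv]
    set u : ℝ := 1 + (1 + a) * t with hud
    set X : ℝ := 1 + (2 + a) * t with hX
    set Y : ℝ := 1 + a * t with hY
    have ha' : 0 < a := Set.mem_Ioi.mp ha
    clear_value u X Y
    have hu0 : (0:ℝ) < u := hud ▸ hbase (1 + a) (by linarith)
    have hx0 : (0:ℝ) < X := hX ▸ hbase (2 + a) (by linarith)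
    have hy0 : (0:ℝ) < Y := hY ▸ hbase a ha'.le
    have hXY : Y ≤ X := by rw [hX, hY]; nlinarith
    have h2u : 2 * u = X + Y := by rw [hud, hX, hY]; ring
    have hkey := key_ineq r hr hy0 hXY
    have he : r + 1 - 1 = r := by ring
    have hu' : u ^ (-r - 1) * u = u ^ (-r) := by
      rw [← Real.rpow_add_one hu0.ne']; norm_num
    have hx' : X ^ (r + 1) = X ^ r * X := Real.rpow_add_one hx0.ne' r
    have hy' : Y ^ (r + 1) = Y ^ r * Y := Real.rpow_add_one hy0.ne' r
    rw [hx', hy'] at hkey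
    rw [he, hx', hy', ← hu']
    have hup : 0 ≤ u ^ (-r - 1) := Real.rpow_nonneg hu0.le _
    have hbr : (r + 1) * u * (X ^ r - Y ^ r) ≤ r * (X ^ r * X - Y ^ r * Y) := by
      have h3 : (r + 1) * u * (X ^ r - Y ^ r)
          = (r + 1) * ((X + Y) / 2) * (X ^ r - Y ^ r) := by
        rw [show (X + Y) / 2 = u by linarith]
      rw [h3]
      nlinarith [hkey, sq_nonneg (X - Y)]
    have hfin := mul_nonneg (mul_nonneg hup ht) (sub_nonneg.2 hbr)
    nlinarith [hfin]
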